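/- For complex a1,b1,a2,b2 and nonnegative integers p1,p2,k: S_{a1,a1+b1}^{a2,a2+b2,p2}(p1,k) = S_{a1,b1}^{a2,b2,p2}(p1,k) + (k+1) · S_{a1,b1}^{a2,b2,p2}(p1,k+1). -/

import Mathlib

open Finset

/-- Stirling numbers of the second kind. -/
def stirling2 : ℕ → ℕ → ℕ
  | 0, 0 => 1
  | 0, _ + 1 => 0
  | _ + 1, 0 => 0
  | p + 1, k + 1 => stirling2 p k + (k + 1) * stirling2 p (k + 1)

/-- Unsigned Stirling numbers of the first kind. -/
def stirling1 : ℕ → ℕ → ℕ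
  | 0, 0 => 1
  | 0, _ + 1 => 0
  | _ + 1, 0 => 0
  | p + 1, k + 1 => stirling1 p k + p * stirling1 p (k + 1)

/-- Stirling numbers of the second kind with integer second argument (0 when negative). -/
def stirling2Z (p : ℕ) (k : ℤ) : ℤ :=
  if k < 0 then 0 else stirling2 p k.toNat

/-- Generalized Stirling number of the second kind
`S_{a1,b1}^{a2,b2,p2}(p1,k)`. -/
noncomputable def gsn (a1 b1 a2 b2 : ℂ) (p1 p2 k : ℕ) : ℂ :=
  (1 / (k.factorial : ℂ)) * ∑ j ∈ range (k + 1),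
    (-1) ^ j * (k.choose j : ℂ) * (a1 * ((k : ℂ) - j) + b1) ^ p1 *
      (a2 * ((k : ℂ) - j) + b2) ^ p2

/-- Generalized Stirling number with integer index (0 when negative). -/
noncomputable def gsnZ (a1 b1 a2 b2 : ℂ) (p1 p2 : ℕ) (k : ℤ) : ℂ :=
  if k < 0 then 0 else gsn a1 b1 a2 b2 p1 p2 k.toNat

lemma key_sum (F : ℂ → ℂ) (k : ℕ) :
    ∑ j ∈ range (k+2), (-1:ℂ)^j * ((k+1).choose j : ℂ) * F ((k:ℂ)+1 - j)
      = ∑ j ∈ range (k+1), (-1:ℂ)^j * (k.choose j : ℂ) * F ((k:ℂ)+1 - j)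
        - ∑ j ∈ range (k+1), (-1:ℂ)^j * (k.choose j : ℂ) * F ((k:ℂ) - j) := by
  rw [Finset.sum_range_succ' (fun j => (-1:ℂ)^j * ((k+1).choose j : ℂ) * F ((k:ℂ)+1 - j)) (k+1)]
  rw [Finset.sum_range_succ' (fun j => (-1:ℂ)^j * (k.choose j : ℂ) * F ((k:ℂ)+1 - j)) k]
  have h1 : ∀ j ∈ range (k+1),
      (-1:ℂ)^(j+1) * ((k+1).choose (j+1) : ℂ) * F ((k:ℂ)+1 - (↑(j+1):ℂ))
      = -((-1:ℂ)^j * (k.choose j : ℂ) * F ((k:ℂ) - j))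
        + (-((-1:ℂ)^j * (k.choose (j+1) : ℂ) * F ((k:ℂ) - j))) := by
    intro j hj
    have harg : ((k:ℂ)+1 - (↑(j+1):ℂ)) = (k:ℂ) - j := by push_cast; ring
    rw [harg, Nat.choose_succ_succ]
    push_cast
    ring
  rw [Finset.sum_congr rfl h1, Finset.sum_add_distrib]
  have h2 : ∀ j ∈ range k,
      (-1:ℂ)^(j+1) * (k.choose (j+1) : ℂ) * F ((k:ℂ)+1 - (↑(j+1):ℂ))
      = -((-1:ℂ)^j * (k.choose (j+1) : ℂ) * F ((k:ℂ) - j)) := by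
    intro j hj
    have harg : ((k:ℂ)+1 - (↑(j+1):ℂ)) = (k:ℂ) - j := by push_cast; ring
    rw [harg]; ring
  rw [Finset.sum_congr rfl h2]
  have h3 : ∑ j ∈ range (k+1), -((-1:ℂ)^j * (k.choose (j+1) : ℂ) * F ((k:ℂ) - j))
      = ∑ j ∈ range k, -((-1:ℂ)^j * (k.choose (j+1) : ℂ) * F ((k:ℂ) - j)) := by
    rw [Finset.sum_range_succ, Nat.choose_succ_self]
    simp
  rw [h3]
  simp only [Finset.sum_neg_distrib]
  simp only [Nat.choose_zero_right, Nat.cast_one]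
  ring

theorem stmt9 (a1 b1 a2 b2 : ℂ) (p1 p2 k : ℕ) :
    gsn a1 (a1 + b1) a2 (a2 + b2) p1 p2 k =
      gsn a1 b1 a2 b2 p1 p2 k + ((k : ℂ) + 1) * gsn a1 b1 a2 b2 p1 p2 (k + 1) := by
  simp only [gsn]
  set F : ℂ → ℂ := fun x => (a1*x+b1)^p1 * (a2*x+b2)^p2 with hF
  have e1 : ∑ j ∈ range (k+1), (-1:ℂ)^j * (k.choose j : ℂ) *
        (a1 * ((k:ℂ) - j) + (a1+b1)) ^ p1 * (a2 * ((k:ℂ) - j) + (a2+b2)) ^ p2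
      = ∑ j ∈ range (k+1), (-1:ℂ)^j * (k.choose j : ℂ) * F ((k:ℂ)+1 - j) := by
    refine Finset.sum_congr rfl fun j hj => ?_
    simp only [hF]
    have h1 : a1 * ((k:ℂ) - j) + (a1+b1) = a1 * ((k:ℂ)+1 - j) + b1 := by ring
    have h2 : a2 * ((k:ℂ) - j) + (a2+b2) = a2 * ((k:ℂ)+1 - j) + b2 := by ring
    rw [h1, h2]; ring
  have e2 : ∑ j ∈ range (k+1), (-1:ℂ)^j * (k.choose j : ℂ) *
        (a1 * ((k:ℂ) - j) + b1) ^ p1 * (a2 * ((k:ℂ) - j) + b2) ^ p2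
      = ∑ j ∈ range (k+1), (-1:ℂ)^j * (k.choose j : ℂ) * F ((k:ℂ) - j) := by
    refine Finset.sum_congr rfl fun j hj => ?_
    simp only [hF]; ring
  have e3 : ∑ j ∈ range (k+1+1), (-1:ℂ)^j * ((k+1).choose j : ℂ) *
        (a1 * ((↑(k+1):ℂ) - j) + b1) ^ p1 * (a2 * ((↑(k+1):ℂ) - j) + b2) ^ p2
      = ∑ j ∈ range (k+2), (-1:ℂ)^j * ((k+1).choose j : ℂ) * F ((k:ℂ)+1 - j) := by
    refine Finset.sum_congr rfl fun j hj => ?_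
    simp only [hF]
    have h1 : (↑(k+1):ℂ) - j = (k:ℂ)+1 - j := by push_cast; ring
    rw [h1]; ring
  rw [e1, e2, e3, key_sum F k]
  have hk : (k.factorial : ℂ) ≠ 0 := Nat.cast_ne_zero.2 k.factorial_ne_zero
  have hk1 : ((k+1).factorial : ℂ) = ((k:ℂ)+1) * (k.factorial : ℂ) := by
    rw [Nat.factorial_succ]; push_cast; ring
  rw [hk1]
  have hk2 : (k:ℂ)+1 ≠ 0 := by
    have := Nat.cast_add_one_ne_zero (R := ℂ) k
    exact this
  field_simp
  ring
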